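/- Let V : ℝ → ℝ, let α < β be real numbers, and let x_α < x_β. Suppose ψ_α, ψ_β : ℝ → ℝ solve the Schrödinger equation with potential V and eigenvalues α and β respectively on [x_α, x_β], with continuous first derivatives there. Assume ψ_α(x_α) = 0, ψ_α'(x_α) > 0, ψ_β(x_α) > 0, and ψ_α(x) > 0 and ψ_β(x) > 0 for all x ∈ (x_α, x_β). Then for every real constant c, the set {x ∈ (x_α, x_β) : ψ_α(x) = c ψ_β(x)} contains at most one point. -/

import Mathlib

/-- At most one transition point: with `ψα, ψβ` solving the Schrödinger equation at energies
`α < β` on `[x_α, x_β]`, `ψα(x_α) = 0`, `ψα'(x_α) > 0`, `ψβ(x_α) > 0` and both positive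
inside, for every constant `c` the equation `ψα = c ψβ` has at most one solution in
`(x_α, x_β)`. -/
theorem at_most_one_transition_point
    (V : ℝ → ℝ) (α β : ℝ) (hαβ : α < β) (xα xβ : ℝ) (hx : xα < xβ)
    (ψα ψα' ψα'' ψβ ψβ' ψβ'' : ℝ → ℝ)
    (hψα1 : ∀ x ∈ Set.Icc xα xβ, HasDerivAt ψα (ψα' x) x)
    (hψα2 : ∀ x ∈ Set.Icc xα xβ, HasDerivAt ψα' (ψα'' x) x)
    (hψαc : ContinuousOn ψα' (Set.Icc xα xβ))
    (hψβ1 : ∀ x ∈ Set.Icc xα xβ, HasDerivAt ψβ (ψβ' x) x)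
    (hψβ2 : ∀ x ∈ Set.Icc xα xβ, HasDerivAt ψβ' (ψβ'' x) x)
    (hψβc : ContinuousOn ψβ' (Set.Icc xα xβ))
    (heqα : ∀ x ∈ Set.Icc xα xβ, -ψα'' x + V x * ψα x = α * ψα x)
    (heqβ : ∀ x ∈ Set.Icc xα xβ, -ψβ'' x + V x * ψβ x = β * ψβ x)
    (hzα : ψα xα = 0) (hdα : 0 < ψα' xα) (hβ0 : 0 < ψβ xα)
    (hposα : ∀ x ∈ Set.Ioo xα xβ, 0 < ψα x)
    (hposβ : ∀ x ∈ Set.Ioo xα xβ, 0 < ψβ x) :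
    ∀ c : ℝ, {x ∈ Set.Ioo xα xβ | ψα x = c * ψβ x}.Subsingleton := by
  intro c
  have hWd : ∀ x ∈ Set.Icc xα xβ,
      HasDerivAt (fun x => ψα' x * ψβ x - ψα x * ψβ' x) ((β - α) * (ψα x * ψβ x)) x := by
    intro x hx
    have h1 := ((hψα2 x hx).mul (hψβ1 x hx)).sub ((hψα1 x hx).mul (hψβ2 x hx))
    have hA : ψα'' x = V x * ψα x - α * ψα x := by linarith [heqα x hx]
    have hB : ψβ'' x = V x * ψβ x - β * ψβ x := by linarith [heqβ x hx]
    refine h1.congr_deriv ?_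
    rw [hA, hB]; ring
  have hWc : ContinuousOn (fun x => ψα' x * ψβ x - ψα x * ψβ' x) (Set.Icc xα xβ) := by
    apply ContinuousOn.sub
    · exact hψαc.mul (fun x hx => (hψβ1 x hx).continuousAt.continuousWithinAt)
    · have : ContinuousOn ψα (Set.Icc xα xβ) :=
        fun x hx => (hψα1 x hx).continuousAt.continuousWithinAt
      exact this.mul hψβc
  have hWmono : StrictMonoOn (fun x => ψα' x * ψβ x - ψα x * ψβ' x) (Set.Icc xα xβ) := by
    apply strictMonoOn_of_deriv_pos (convex_Icc _ _) hWc
    intro x hxm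
    rw [interior_Icc] at hxm
    rw [(hWd x (Set.Ioo_subset_Icc_self hxm)).deriv]
    exact mul_pos (sub_pos.mpr hαβ) (mul_pos (hposα x hxm) (hposβ x hxm))
  have hWpos : ∀ x ∈ Set.Ioo xα xβ, 0 < ψα' x * ψβ x - ψα x * ψβ' x := by
    intro x hxm
    have h0 : ψα' xα * ψβ xα - ψα xα * ψβ' xα = ψα' xα * ψβ xα := by rw [hzα]; ring
    have hlt := hWmono (Set.left_mem_Icc.2 hx.le) (Set.Ioo_subset_Icc_self hxm) hxm.1
    simp only at hlt
    nlinarith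
  have hrmono : StrictMonoOn (fun x => ψα x / ψβ x) (Set.Ioo xα xβ) := by
    have hrd : ∀ x ∈ Set.Ioo xα xβ, HasDerivAt (fun x => ψα x / ψβ x)
        ((ψα' x * ψβ x - ψα x * ψβ' x) / ψβ x ^ 2) x := by
      intro x hxm
      exact (hψα1 x (Set.Ioo_subset_Icc_self hxm)).div (hψβ1 x (Set.Ioo_subset_Icc_self hxm))
        (hposβ x hxm).ne'
    apply strictMonoOn_of_deriv_pos (convex_Ioo _ _)
    · exact fun x hxm => (hrd x hxm).continuousAt.continuousWithinAt
    · intro x hxm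
      rw [interior_Ioo] at hxm
      rw [(hrd x hxm).deriv]
      exact div_pos (hWpos x hxm) (pow_pos (hposβ x hxm) 2)
  intro a ha b hb
  simp only [Set.mem_setOf_eq] at ha hb
  have hra : ψα a / ψβ a = c := by
    rw [ha.2, mul_div_assoc, div_self (hposβ a ha.1).ne', mul_one]
  have hrb : ψα b / ψβ b = c := by
    rw [hb.2, mul_div_assoc, div_self (hposβ b hb.1).ne', mul_one]
  by_contra hne
  rcases lt_or_gt_of_ne hne with h | h
  · have := hrmono ha.1 hb.1 h
    simp only [hra, hrb, lt_self_iff_false] at this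
  · have := hrmono hb.1 ha.1 h
    simp only [hra, hrb, lt_self_iff_false] at this
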